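/- Let n ≥ 1, let C be a nonempty closed convex subset of EuclideanSpace ℝ (Fin n), let σ > 0, let 0 < γ ≤ σ², and set c = γ/σ². Suppose x ∈ EuclideanSpace ℝ (Fin n) satisfies ‖(1-c)·x‖ ≤ ⨅_{y ∈ C} ‖(1-c)·y‖ (the paper's condition (8) that the gradient step from x lands at least as close to the optimum 0 as the closest point reachable by a single gradient step from any point of C). Let p be the metric projection of x onto C, and let ε be distributed according to the standard Gaussian measure on ℝⁿ (the product of n standard real Gaussians). Then ∫ infDist((1-c)·x + √(2γ)·ε, C)² dε ≥ ∫ infDist((1-c)·p + √(2γ)·ε, C)² dε; that is, the expected cost of projection after applying the update operator to x is at least the expected cost of projection after applying the update operator to P_C(x). (Theorem 1 of the paper, instantiated with the Gaussian score.) -/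

import Mathlib

open MeasureTheory Metric ProbabilityTheory Set
open scoped ENNReal InnerProductSpace

lemma aux_lintegral_pi_prod (μ : Measure ℝ) [SigmaFinite μ] :
    ∀ (n : ℕ) (f : Fin n → ℝ → ℝ≥0∞), (∀ i, Measurable (f i)) →
      ∫⁻ x, ∏ i, f i (x i) ∂(Measure.pi fun _ : Fin n => μ) = ∏ i, ∫⁻ y, f i y ∂μ := by
  intro n
  induction n with
  | zero =>
    intro f hf
    simp [lintegral_const, Measure.pi_empty_univ]
  | succ n ih =>
    intro f hf
    have hmp := (measurePreserving_piFinSuccAbove (fun _ : Fin (n + 1) => μ) 0).symm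
    have hF : Measurable fun x : Fin (n + 1) → ℝ => ∏ i, f i (x i) :=
      Finset.measurable_prod _ fun i _ => (hf i).comp (measurable_pi_apply i)
    rw [← hmp.lintegral_comp hF]
    simp_rw [MeasurableEquiv.piFinSuccAbove_symm_apply, Fin.insertNthEquiv,
      Fin.prod_univ_succ, Fin.insertNth_zero]
    simp only [Fin.zero_succAbove, Function.comp_def, Fin.cons_zero, Fin.cons_succ, cast_eq,
      Equiv.coe_fn_mk]
    rw [lintegral_prod_mul (f := fun y : ℝ => f 0 y) (g := fun b : Fin n → ℝ => ∏ i, f i.succ (b i)) (hf 0).aemeasurable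
      ((Finset.measurable_prod _ fun i _ => (hf i.succ).comp (measurable_pi_apply i)).aemeasurable)]
    rw [ih (fun i => f i.succ) (fun i => hf i.succ)]

lemma aux_pi_gauss (n : ℕ) : (Measure.pi fun _ : Fin n => gaussianReal 0 1) =
    (volume : Measure (Fin n → ℝ)).withDensity fun x => ∏ i, gaussianPDF 0 1 (x i) := by
  refine Measure.pi_eq fun s hs => ?_
  have hbox : MeasurableSet (Set.univ.pi s) := MeasurableSet.univ_pi hs
  rw [withDensity_apply _ hbox, ← lintegral_indicator hbox]
  have hind : ∀ x : Fin n → ℝ, (Set.univ.pi s).indicator (fun x => ∏ i, gaussianPDF 0 1 (x i)) x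
      = ∏ i, (s i).indicator (gaussianPDF 0 1) (x i) := by
    intro x
    by_cases hx : x ∈ Set.univ.pi s
    · rw [Set.indicator_of_mem hx]
      exact Finset.prod_congr rfl fun i _ => (Set.indicator_of_mem (hx i trivial) _).symm
    · rw [Set.indicator_of_notMem hx]
      obtain ⟨i, hi⟩ : ∃ i, x i ∉ s i := by simpa [Set.mem_pi] using hx
      exact (Finset.prod_eq_zero (Finset.mem_univ i)
        (by simp [Set.indicator_of_notMem hi])).symm
  simp_rw [hind]
  rw [volume_pi, aux_lintegral_pi_prod _ n _
    (fun i => (measurable_gaussianPDF 0 1).indicator (hs i))]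
  refine Finset.prod_congr rfl fun i _ => ?_
  rw [gaussianReal_of_var_ne_zero 0 one_ne_zero, withDensity_apply _ (hs i),
    ← lintegral_indicator (hs i)]

lemma aux_map_withDensity {α β : Type*} [MeasurableSpace α] [MeasurableSpace β]
    (e : α ≃ᵐ β) (ν : Measure α) (g : β → ℝ≥0∞) (hg : Measurable g) :
    Measure.map e (ν.withDensity fun a => g (e a)) = (Measure.map e ν).withDensity g := by
  ext s hs
  rw [Measure.map_apply e.measurable hs, withDensity_apply _ hs,
    withDensity_apply _ (e.measurable hs), setLIntegral_map hs hg e.measurable]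

lemma aux_mu_eq (n : ℕ) :
    Measure.map (MeasurableEquiv.toLp 2 (Fin n → ℝ))
        (Measure.pi fun _ : Fin n => gaussianReal 0 1)
      = (volume : Measure (EuclideanSpace ℝ (Fin n))).withDensity
          fun w => ENNReal.ofReal
            ((Real.sqrt (2 * Real.pi))⁻¹ ^ n * Real.exp (-‖w‖ ^ 2 / 2)) := by
  have hg : Measurable fun w : EuclideanSpace ℝ (Fin n) =>
      ENNReal.ofReal ((Real.sqrt (2 * Real.pi))⁻¹ ^ n * Real.exp (-‖w‖ ^ 2 / 2)) := by
    fun_prop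
  rw [aux_pi_gauss]
  have hdens : (fun x : Fin n → ℝ => ∏ i, gaussianPDF 0 1 (x i))
      = fun x : Fin n → ℝ => ENNReal.ofReal ((Real.sqrt (2 * Real.pi))⁻¹ ^ n *
          Real.exp (-‖(MeasurableEquiv.toLp 2 (Fin n → ℝ)) x‖ ^ 2 / 2)) := by
    funext x
    have hcoord : ∀ i, ((MeasurableEquiv.toLp 2 (Fin n → ℝ)) x) i = x i := by
      intro i; rfl
    have hnorm : ‖(MeasurableEquiv.toLp 2 (Fin n → ℝ)) x‖ ^ 2 = ∑ i, (x i) ^ 2 := by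
      rw [EuclideanSpace.norm_eq, Real.sq_sqrt (by positivity)]
      simp_rw [hcoord, Real.norm_eq_abs, sq_abs]
    rw [hnorm]
    unfold gaussianPDF
    rw [← ENNReal.ofReal_prod_of_nonneg (fun i _ => gaussianPDFReal_nonneg 0 1 (x i))]
    congr 1
    simp_rw [gaussianPDFReal_def]
    push_cast
    rw [Finset.prod_mul_distrib, Finset.prod_const, ← Real.exp_sum]
    simp only [Finset.card_univ, Fintype.card_fin, mul_one, sub_zero]
    rw [← Finset.sum_div, ← Finset.sum_neg_distrib]

  rw [hdens, aux_map_withDensity _ _ _ hg,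
    (show MeasurePreserving (MeasurableEquiv.toLp 2 (Fin n → ℝ)) volume volume from
      MeasurePreserving.symm _ (EuclideanSpace.volume_preserving_symm_measurableEquiv_toLp (Fin n))).map_eq]

lemma aux_inv (n : ℕ) (f : EuclideanSpace ℝ (Fin n) ≃ₗᵢ[ℝ] EuclideanSpace ℝ (Fin n)) :
    Measure.map f (Measure.map (MeasurableEquiv.toLp 2 (Fin n → ℝ))
        (Measure.pi fun _ : Fin n => gaussianReal 0 1))
      = Measure.map (MeasurableEquiv.toLp 2 (Fin n → ℝ))
          (Measure.pi fun _ : Fin n => gaussianReal 0 1) := by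
  rw [aux_mu_eq]
  set g : EuclideanSpace ℝ (Fin n) → ℝ≥0∞ := fun w =>
    ENNReal.ofReal ((Real.sqrt (2 * Real.pi))⁻¹ ^ n * Real.exp (-‖w‖ ^ 2 / 2)) with hgdef
  have hg : Measurable g := by fun_prop
  have e' : EuclideanSpace ℝ (Fin n) ≃ᵐ EuclideanSpace ℝ (Fin n) :=
    f.toHomeomorph.toMeasurableEquiv
  have hcoe : (⇑(f.toHomeomorph.toMeasurableEquiv) : EuclideanSpace ℝ (Fin n) → _) = ⇑f := rfl
  have hge : (fun a => g (f.toHomeomorph.toMeasurableEquiv a)) = g := by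
    funext a; simp [hgdef, hcoe, f.norm_map]
  calc Measure.map f ((volume : Measure (EuclideanSpace ℝ (Fin n))).withDensity g)
      = Measure.map f.toHomeomorph.toMeasurableEquiv
          ((volume : Measure (EuclideanSpace ℝ (Fin n))).withDensity
            fun a => g (f.toHomeomorph.toMeasurableEquiv a)) := by rw [hge, hcoe]
    _ = (Measure.map f.toHomeomorph.toMeasurableEquiv
          (volume : Measure (EuclideanSpace ℝ (Fin n)))).withDensity g :=
        aux_map_withDensity _ _ _ hg
    _ = (volume : Measure (EuclideanSpace ℝ (Fin n))).withDensity g := by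
        rw [hcoe, f.measurePreserving.map_eq]

lemma aux_key {n : ℕ} (C : Set (EuclideanSpace ℝ (Fin n))) (hCcl : IsClosed C)
    (hCne : C.Nonempty) (a P : EuclideanSpace ℝ (Fin n))
    (hC : ∀ y ∈ C, ⟪a, y⟫_ℝ ≤ ⟪a, P⟫_ℝ) {s₁ s₂ : ℝ} (h : s₁ ≤ s₂) :
    infDist (P + s₁ • a) C ^ 2 + infDist (P - s₂ • a) C ^ 2
      ≤ infDist (P + s₂ • a) C ^ 2 + infDist (P - s₁ • a) C ^ 2 := by
  obtain ⟨Y₂, hY₂C, hY₂⟩ := hCcl.exists_infDist_eq_dist hCne (P + s₂ • a)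
  obtain ⟨Y₁, hY₁C, hY₁⟩ := hCcl.exists_infDist_eq_dist hCne (P - s₁ • a)
  have hd : ∀ (s : ℝ) (Y : EuclideanSpace ℝ (Fin n)), dist (P + s • a) Y ^ 2
      = ‖P - Y‖ ^ 2 + 2 * s * ⟪a, P - Y⟫_ℝ + s ^ 2 * ‖a‖ ^ 2 := by
    intro s Y
    rw [dist_eq_norm, show P + s • a - Y = (P - Y) + s • a by abel, norm_add_sq_real,
      real_inner_smul_right, norm_smul, real_inner_comm]
    simp [mul_pow, sq_abs]
    ring
  have hd' : ∀ (s : ℝ) (Y : EuclideanSpace ℝ (Fin n)), dist (P - s • a) Y ^ 2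
      = ‖P - Y‖ ^ 2 + 2 * (-s) * ⟪a, P - Y⟫_ℝ + s ^ 2 * ‖a‖ ^ 2 := by
    intro s Y
    rw [show P - s • a = P + (-s) • a by rw [neg_smul]; abel, hd]
    ring
  have hA2 : 0 ≤ ⟪a, P - Y₂⟫_ℝ := by
    rw [inner_sub_right]; linarith [hC Y₂ hY₂C]
  have hA1 : 0 ≤ ⟪a, P - Y₁⟫_ℝ := by
    rw [inner_sub_right]; linarith [hC Y₁ hY₁C]
  have l1 : infDist (P + s₁ • a) C ≤ dist (P + s₁ • a) Y₂ := infDist_le_dist_of_mem hY₂C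
  have l2 : infDist (P - s₂ • a) C ≤ dist (P - s₂ • a) Y₁ := infDist_le_dist_of_mem hY₁C
  have q1 : infDist (P + s₁ • a) C ^ 2 ≤ dist (P + s₁ • a) Y₂ ^ 2 := by
    have := infDist_nonneg (s := C) (x := P + s₁ • a); nlinarith
  have q2 : infDist (P - s₂ • a) C ^ 2 ≤ dist (P - s₂ • a) Y₁ ^ 2 := by
    have := infDist_nonneg (s := C) (x := P - s₂ • a); nlinarith
  rw [hY₂, hY₁]
  rw [hd s₂ Y₂, hd' s₁ Y₁]
  rw [hd s₁ Y₂] at q1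
  rw [hd' s₂ Y₁] at q2
  nlinarith [mul_nonneg (sub_nonneg.2 h) hA2, mul_nonneg (sub_nonneg.2 h) hA1]

lemma aux_exp_int (n : ℕ) :
    Integrable (fun w : EuclideanSpace ℝ (Fin n) => Real.exp (-(4⁻¹ : ℝ) * ‖w‖ ^ 2)) volume := by
  have h := (GaussianFourier.integrable_cexp_neg_mul_sq_norm_add (V := EuclideanSpace ℝ (Fin n))
    (b := (4⁻¹ : ℂ)) (by norm_num) 0 0).norm
  refine h.congr (Filter.Eventually.of_forall fun v => ?_)
  simp only [Complex.norm_exp, zero_mul, add_zero]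
  congr 1
  have : ((-(4⁻¹ : ℂ)) * (‖v‖ : ℂ) ^ 2) = ((-(4⁻¹ : ℝ) * ‖v‖ ^ 2 : ℝ) : ℂ) := by push_cast; ring
  rw [this, Complex.ofReal_re]

lemma aux_integrable {n : ℕ} (C : Set (EuclideanSpace ℝ (Fin n)))
    (z : EuclideanSpace ℝ (Fin n)) (τ : ℝ) :
    Integrable (fun ε : EuclideanSpace ℝ (Fin n) => infDist (z + τ • ε) C ^ 2)
      (Measure.map (MeasurableEquiv.toLp 2 (Fin n → ℝ))
        (Measure.pi fun _ : Fin n => gaussianReal 0 1)) := by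
  rw [aux_mu_eq]
  set ρ : EuclideanSpace ℝ (Fin n) → ℝ :=
    fun w => (Real.sqrt (2 * Real.pi))⁻¹ ^ n * Real.exp (-‖w‖ ^ 2 / 2) with hρ
  have hρ0 : ∀ w, 0 ≤ ρ w := fun w => by positivity
  have hmeas : Measurable fun w : EuclideanSpace ℝ (Fin n) => ENNReal.ofReal (ρ w) := by fun_prop
  rw [integrable_withDensity_iff hmeas
    (Filter.Eventually.of_forall fun w => ENNReal.ofReal_lt_top)]
  have htoReal : ∀ w, (ENNReal.ofReal (ρ w)).toReal = ρ w :=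
    fun w => ENNReal.toReal_ofReal (hρ0 w)
  simp only [htoReal]
  set K := infDist z C with hK
  have hK0 : 0 ≤ K := infDist_nonneg
  set T := |τ| with hT
  have hT0 : 0 ≤ T := abs_nonneg τ
  set cst := (Real.sqrt (2 * Real.pi))⁻¹ ^ n with hcst
  have hcst0 : 0 ≤ cst := by positivity
  set M := cst * (2 * K ^ 2 + 8 * T ^ 2) with hM
  have hcont : Continuous fun w : EuclideanSpace ℝ (Fin n) => infDist (z + τ • w) C ^ 2 * ρ w := by
    apply Continuous.mul
    · exact (((continuous_infDist_pt C).comp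
        (continuous_const.add (continuous_id.const_smul τ))).pow 2)
    · fun_prop
  refine Integrable.mono' ((aux_exp_int n).const_mul M) hcont.aestronglyMeasurable
    (Filter.Eventually.of_forall fun w => ?_)
  set r := ‖w‖ with hr
  have hr0 : 0 ≤ r := norm_nonneg w
  set X := Real.exp (-(4⁻¹ : ℝ) * r ^ 2) with hX
  have hX0 : 0 < X := Real.exp_pos _
  have hX1 : X ≤ 1 := Real.exp_le_one_iff.2 (by nlinarith)
  have hXX : Real.exp (-r ^ 2 / 2) = X * X := by
    rw [hX, ← Real.exp_add]; ring_nf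
  have hrX : r ^ 2 * X ≤ 4 := by
    have h1 := Real.add_one_le_exp ((4⁻¹ : ℝ) * r ^ 2)
    have h2 : Real.exp ((4⁻¹ : ℝ) * r ^ 2) * X = 1 := by
      rw [hX, ← Real.exp_add]; ring_nf; exact Real.exp_zero
    nlinarith
  have hd : infDist (z + τ • w) C ≤ K + T * r := by
    have h := infDist_le_infDist_add_dist (x := z + τ • w) (y := z) (s := C)
    have : dist (z + τ • w) z = T * r := by
      rw [dist_eq_norm, add_sub_cancel_left, norm_smul, hT, hr]; rfl
    linarith [h, this.le.trans (le_refl _)]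
  have hd0 : 0 ≤ infDist (z + τ • w) C := infDist_nonneg
  have hsq : infDist (z + τ • w) C ^ 2 ≤ (K + T * r) ^ 2 := by nlinarith
  have hb1 : (K + T * r) ^ 2 ≤ 2 * K ^ 2 + 2 * T ^ 2 * r ^ 2 := by nlinarith [sq_nonneg (K - T * r)]
  have hρw : ρ w = cst * (X * X) := by rw [hρ]; dsimp only; rw [← hr, hXX]
  have hnorm : ‖infDist (z + τ • w) C ^ 2 * ρ w‖ = infDist (z + τ • w) C ^ 2 * ρ w := by
    rw [Real.norm_eq_abs, abs_of_nonneg (mul_nonneg (by positivity) (hρ0 w))]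
  rw [hnorm, hρw]
  have step1 : infDist (z + τ • w) C ^ 2 * (cst * (X * X))
      ≤ (2 * K ^ 2 + 2 * T ^ 2 * r ^ 2) * (cst * (X * X)) := by
    have : infDist (z + τ • w) C ^ 2 ≤ 2 * K ^ 2 + 2 * T ^ 2 * r ^ 2 := le_trans hsq hb1
    exact mul_le_mul_of_nonneg_right this (by positivity)
  refine le_trans step1 ?_
  have goal2 : (2 * K ^ 2 + 2 * T ^ 2 * r ^ 2) * (cst * (X * X)) ≤ M * X := by
    rw [hM]
    nlinarith [mul_nonneg (mul_nonneg (sub_nonneg.2 hX1) hX0.le) (sq_nonneg K),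
      mul_nonneg (mul_nonneg (sub_nonneg.2 hrX) hX0.le) (sq_nonneg T),
      mul_nonneg hcst0 (mul_nonneg (mul_nonneg (sub_nonneg.2 hX1) hX0.le) (sq_nonneg K)),
      mul_nonneg hcst0 (mul_nonneg (mul_nonneg (sub_nonneg.2 hrX) hX0.le) (sq_nonneg T))]
  exact goal2

set_option maxHeartbeats 1000000 in
/-- Theorem 1 of the paper (expectation form, Gaussian score, Euclidean space):
if the gradient step from `x` lands at least as close to the optimum `0` as the
closest point reachable by a single gradient step from any point of `C`, then
the expected projection cost after one noisy PGDM update from `x` is at least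
that after the same update from the metric projection `p` of `x` onto `C`. -/
theorem stmt0 (n : ℕ) (hn : 1 ≤ n) (C : Set (EuclideanSpace ℝ (Fin n)))
    (hCne : C.Nonempty) (hCcl : IsClosed C) (hCcv : Convex ℝ C)
    (σ γ : ℝ) (hσ : 0 < σ) (hγ : 0 < γ) (hγσ : γ ≤ σ ^ 2)
    (c : ℝ) (hc : c = γ / σ ^ 2)
    (x p : EuclideanSpace ℝ (Fin n))
    (hx : ‖(1 - c) • x‖ ≤ ⨅ y : C, ‖(1 - c) • (y : EuclideanSpace ℝ (Fin n))‖)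
    (hpC : p ∈ C) (hpd : dist x p = infDist x C) :
    ∫ ε, infDist ((1 - c) • x + Real.sqrt (2 * γ) • ε) C ^ 2
        ∂(Measure.map (MeasurableEquiv.toLp 2 (Fin n → ℝ))
            (Measure.pi fun _ : Fin n => gaussianReal 0 1)) ≥
      ∫ ε, infDist ((1 - c) • p + Real.sqrt (2 * γ) • ε) C ^ 2
        ∂(Measure.map (MeasurableEquiv.toLp 2 (Fin n → ℝ))
            (Measure.pi fun _ : Fin n => gaussianReal 0 1)) := by
  by_cases hup : (1 - c) • x = (1 - c) • p
  · rw [hup]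
  rw [ge_iff_le]
  set μ := Measure.map (MeasurableEquiv.toLp 2 (Fin n → ℝ))
      (Measure.pi fun _ : Fin n => gaussianReal 0 1) with hμ
  set τ := Real.sqrt (2 * γ) with hτ
  set u := (1 - c) • x with hu
  set v := (1 - c) • p with hv
  -- scalar facts
  have hσ2 : (0:ℝ) < σ ^ 2 := by positivity
  have hc1 : c ≤ 1 := by rw [hc]; exact (div_le_one hσ2).2 hγσ
  have hc0 : 0 < c := by rw [hc]; positivity
  have hs0 : 0 ≤ 1 - c := by linarith
  have hsne : (1 - c) ≠ 0 := by
    intro h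
    exact hup (by rw [hu, hv, h, zero_smul, zero_smul])
  have hspos : 0 < 1 - c := lt_of_le_of_ne hs0 (Ne.symm hsne)
  -- ‖x‖ ≤ ‖p‖
  have hxp : ‖x‖ ≤ ‖p‖ := by
    haveI : Nonempty C := hCne.to_subtype
    have hble : BddBelow (Set.range fun y : C => ‖(1 - c) • (y : EuclideanSpace ℝ (Fin n))‖) :=
      ⟨0, by rintro b ⟨y, rfl⟩; exact norm_nonneg _⟩
    have h1 := hx.trans (ciInf_le hble (⟨p, hpC⟩ : C))
    rw [norm_smul, norm_smul] at h1
    have : (0:ℝ) < ‖(1 - c : ℝ)‖ := by rw [Real.norm_eq_abs, abs_of_pos hspos]; exact hspos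
    exact le_of_mul_le_mul_left h1 this
  have hAB : ‖x‖ ^ 2 ≤ ‖p‖ ^ 2 := by nlinarith [norm_nonneg x]
  -- projection characterization
  have hproj : ∀ w ∈ C, ⟪x - p, w - p⟫_ℝ ≤ 0 := by
    refine (norm_eq_iInf_iff_real_inner_le_zero hCcv hpC).1 ?_
    have h2 : infDist x C = ⨅ w : C, ‖x - (w : EuclideanSpace ℝ (Fin n))‖ := by
      rw [infDist_eq_iInf]; simp_rw [dist_eq_norm]
    rw [← dist_eq_norm, hpd, h2]
  -- geometry setup
  set a := u - v with ha
  have ha0 : a ≠ 0 := sub_ne_zero.2 hup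
  have hna : (0:ℝ) < ‖a‖ := norm_pos_iff.2 ha0
  set m : EuclideanSpace ℝ (Fin n) := (2⁻¹ : ℝ) • (u + v) with hm
  have hasm : a = (1 - c) • (x - p) := by rw [ha, hu, hv, smul_sub]
  -- halfspace property
  have hhalf : ∀ y ∈ C, ⟪a, y⟫_ℝ ≤ ⟪a, m⟫_ℝ := by
    intro y hy
    have h1 : ⟪x - p, y - p⟫_ℝ ≤ 0 := hproj y hy
    have e1 : ⟪a, y⟫_ℝ = (1 - c) * ⟪x - p, y⟫_ℝ := by
      rw [hasm, real_inner_smul_left]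
    have e2 : ⟪a, m⟫_ℝ = 2⁻¹ * ((1 - c) ^ 2 * (‖x‖ ^ 2 - ‖p‖ ^ 2)) := by
      rw [hasm, hm, hu, hv, real_inner_smul_left, real_inner_smul_right, inner_add_right,
        real_inner_smul_right, real_inner_smul_right, inner_sub_left, inner_sub_left,
        real_inner_self_eq_norm_sq, real_inner_self_eq_norm_sq, real_inner_comm p x]
      ring
    have f1 : ⟪x - p, y⟫_ℝ = ⟪x - p, y - p⟫_ℝ + ⟪x - p, p⟫_ℝ := by
      rw [← inner_add_right, sub_add_cancel]
    have f2 : ⟪x - p, p⟫_ℝ = ⟪x, p⟫_ℝ - ‖p‖ ^ 2 := by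
      rw [inner_sub_left, real_inner_self_eq_norm_sq]
    have f3 : ‖x - p‖ ^ 2 = ‖x‖ ^ 2 - 2 * ⟪x, p⟫_ℝ + ‖p‖ ^ 2 := norm_sub_sq_real x p
    rw [e1, e2]
    nlinarith [mul_nonneg (mul_nonneg hs0 hc0.le) (sub_nonneg.2 hAB),
      mul_nonneg hs0 (sq_nonneg ‖x - p‖), mul_nonneg hs0 (neg_nonneg.2 h1)]
  -- reflection
  set R := Submodule.reflection (ℝ ∙ a)ᗮ with hR
  have hRapply : ∀ w : EuclideanSpace ℝ (Fin n),
      R w = w - ((2 * ⟪a, w⟫_ℝ) / ‖a‖ ^ 2) • a := by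
    intro w
    rw [hR, Submodule.reflection_orthogonal_apply, Submodule.reflection_singleton_apply, neg_sub]
    congr 1
    rw [two_smul, ← add_smul]
    congr 1
    push_cast [RCLike.ofReal_real_eq_id, id_eq]
    ring
  have hum : u = m + (2⁻¹ : ℝ) • a := by rw [hm, ha]; module
  have hvm : v = m - (2⁻¹ : ℝ) • a := by rw [hm, ha]; module
  -- pointwise inequality
  have hpt : ∀ ε : EuclideanSpace ℝ (Fin n),
      infDist (v + τ • ε) C ^ 2 + infDist (v + τ • (R ε)) C ^ 2
        ≤ infDist (u + τ • ε) C ^ 2 + infDist (u + τ • (R ε)) C ^ 2 := by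
    intro ε
    set w := τ • ε with hw
    set t := ⟪a, w⟫_ℝ / ‖a‖ ^ 2 with htdef
    set P := m + w - t • a with hP
    have hRw : τ • (R ε) = w - (2 * t) • a := by
      rw [← R.map_smul, ← hw, hRapply w, htdef]
      congr 2
      field_simp
    have hCP : ∀ y ∈ C, ⟪a, y⟫_ℝ ≤ ⟪a, P⟫_ℝ := by
      intro y hy
      have hPm : ⟪a, P⟫_ℝ = ⟪a, m⟫_ℝ := by
        simp only [hP, inner_sub_right, inner_add_right, real_inner_smul_right,
          real_inner_self_eq_norm_sq, htdef]
        field_simp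
        ring
      rw [hPm]; exact hhalf y hy
    have I1 : u + w = P + (t + 2⁻¹) • a := by rw [hP, hum]; module
    have I2 : v + w = P + (t - 2⁻¹) • a := by rw [hP, hvm]; module
    have I3 : u + (w - (2 * t) • a) = P - (t - 2⁻¹) • a := by rw [hP, hum]; module
    have I4 : v + (w - (2 * t) • a) = P - (t + 2⁻¹) • a := by rw [hP, hvm]; module
    rw [hRw, I1, I2, I3, I4]
    exact aux_key C hCcl hCne a P hCP (by linarith : t - 2⁻¹ ≤ t + 2⁻¹)
  -- integration
  have hmp : MeasurePreserving (⇑R) μ μ :=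
    ⟨R.toHomeomorph.continuous.measurable, aux_inv n R⟩
  have hemb : MeasurableEmbedding (⇑R) := by
    have := R.toHomeomorph.toMeasurableEquiv.measurableEmbedding
    exact this
  have hIu : Integrable (fun ε : EuclideanSpace ℝ (Fin n) => infDist (u + τ • ε) C ^ 2) μ :=
    aux_integrable C u τ
  have hIv : Integrable (fun ε : EuclideanSpace ℝ (Fin n) => infDist (v + τ • ε) C ^ 2) μ :=
    aux_integrable C v τ
  have hIu' : Integrable (fun ε : EuclideanSpace ℝ (Fin n) => infDist (u + τ • (R ε)) C ^ 2) μ :=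
    (hmp.integrable_comp_emb hemb).2 hIu
  have hIv' : Integrable (fun ε : EuclideanSpace ℝ (Fin n) => infDist (v + τ • (R ε)) C ^ 2) μ :=
    (hmp.integrable_comp_emb hemb).2 hIv
  have hmono : ∫ ε, (infDist (v + τ • ε) C ^ 2 + infDist (v + τ • (R ε)) C ^ 2) ∂μ
      ≤ ∫ ε, (infDist (u + τ • ε) C ^ 2 + infDist (u + τ • (R ε)) C ^ 2) ∂μ :=
    integral_mono (hIv.add hIv') (hIu.add hIu') hpt
  rw [integral_add hIv hIv', integral_add hIu hIu'] at hmono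
  have eq_u : ∫ ε, infDist (u + τ • (R ε)) C ^ 2 ∂μ
      = ∫ ε, infDist (u + τ • ε) C ^ 2 ∂μ :=
    hmp.integral_comp hemb (fun ε => infDist (u + τ • ε) C ^ 2)
  have eq_v : ∫ ε, infDist (v + τ • (R ε)) C ^ 2 ∂μ
      = ∫ ε, infDist (v + τ • ε) C ^ 2 ∂μ :=
    hmp.integral_comp hemb (fun ε => infDist (v + τ • ε) C ^ 2)
  rw [eq_u, eq_v] at hmono
  linarith
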